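/- Let M be an L_a-structure, v ∈ M a certified element, and k ∈ ℕ such that M ⊨ m̄ ≠ v for all m < k. Then for all m, n ≤ k: (1) M ⊨ m̄ × n̄ = (m·n)̄, and (2) M ⊨ m̄ + n̄ = (m+n)̄. -/
import Mathlib


open FirstOrder FirstOrder.Language

/-- Function symbols of the arithmetic language `L_a = {0, S, +, ×, ≤}`. -/
inductive AFunc : ℕ → Type
  | zero : AFunc 0
  | succ : AFunc 1
  | add : AFunc 2
  | mul : AFunc 2

/-- Relation symbols of `L_a`: the single binary relation `≤`. -/
inductive ARel : ℕ → Type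
  | le : ARel 2

/-- The first-order language of arithmetic `L_a = {0, S, +, ×, ≤}`. -/
def La : Language := ⟨AFunc, ARel⟩

/-- The standard model ℕ as an `La`-structure. -/
instance : La.Structure ℕ where
  funMap := fun {n} f => match f with
    | .zero => fun _ => 0
    | .succ => fun v => v 0 + 1
    | .add => fun v => v 0 + v 1
    | .mul => fun v => v 0 * v 1
  RelMap := fun {n} r => match r with
    | .le => fun v => v 0 ≤ v 1

/-- The term `0`. -/
def zeroT {β : Type} : La.Term β := Term.func AFunc.zero ![]
/-- The term `S t`. -/
def succT {β : Type} (t : La.Term β) : La.Term β := Term.func AFunc.succ ![t]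
/-- The term `t + u`. -/
def addT {β : Type} (t u : La.Term β) : La.Term β := Term.func AFunc.add ![t, u]
/-- The term `t × u`. -/
def mulT {β : Type} (t u : La.Term β) : La.Term β := Term.func AFunc.mul ![t, u]

/-- The numeral `S…S0`. -/
def num {β : Type} : ℕ → La.Term β
  | 0 => zeroT
  | n + 1 => succT (num n)

/-- The atomic formula `t ≤ u`. -/
def leF {α : Type} {n : ℕ} (t u : La.Term (α ⊕ Fin n)) : La.BoundedFormula α n :=
  Relations.boundedFormula ARel.le ![t, u]

/-- The formula `t < u`, i.e. `t ≤ u ∧ t ≠ u`. -/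
def ltF {α : Type} {n : ℕ} (t u : La.Term (α ⊕ Fin n)) : La.BoundedFormula α n :=
  leF t u ⊓ ∼(t =' u)

/-- Lift a term of context `n` to context `n+1`. -/
def liftT {α : Type} {n : ℕ} (t : La.Term (α ⊕ Fin n)) : La.Term (α ⊕ Fin (n + 1)) :=
  t.relabel (Sum.map id Fin.castSucc)

/-- The de Bruijn variable `i` as a term. -/
def vr {α : Type} {n : ℕ} (i : Fin n) : La.Term (α ⊕ Fin n) := Term.var (Sum.inr i)

section Semantics
open FirstOrder.Language.Structure

variable (M : Type) [La.Structure M]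

/-- The interpretation of `0` in `M`. -/
def zM : M := funMap (L := La) AFunc.zero ![]
/-- The interpretation of successor in `M`. -/
def sM (x : M) : M := funMap (L := La) AFunc.succ ![x]
/-- The interpretation of addition in `M`. -/
def addM (x y : M) : M := funMap (L := La) AFunc.add ![x, y]
/-- The interpretation of multiplication in `M`. -/
def mulM (x y : M) : M := funMap (L := La) AFunc.mul ![x, y]
/-- The interpretation of `≤` in `M`. -/
def leM (x y : M) : Prop := RelMap (L := La) ARel.le ![x, y]
/-- `x < y` in `M`: `x ≤ y ∧ x ≠ y`. -/
def ltM (x y : M) : Prop := leM M x y ∧ x ≠ y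
/-- The interpretation of the numeral `m̄` in `M`. -/
def natM : ℕ → M
  | 0 => zM M
  | m + 1 => sM M (natM m)

/-- An element `v` of an `L_a`-structure is *certified* if it satisfies the
certification axioms A1–A10. -/
structure Certified (v : M) : Prop where
  a1 : leM M (zM M) v
  a2 : ∀ x : M, ltM M x v → leM M (sM M x) v
  a3 : ∀ x : M, leM M x (zM M) ↔ x = zM M
  a4 : ∀ x : M, ltM M x v → ∀ y : M, leM M y (sM M x) ↔ (leM M y x ∨ y = sM M x)
  a5 : ∀ x y z : M, leM M x v → leM M y v → leM M z v →
    sM M (addM M (mulM M x y) z) ≠ zM M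
  a6 : ∀ x y z w : M, leM M x v → leM M y v → leM M z v → leM M w v →
    sM M (addM M (mulM M x y) z) = sM M w → addM M (mulM M x y) z = w
  a7 : ∀ x y : M, leM M x v → leM M y v → addM M (mulM M x y) (zM M) = mulM M x y
  a8 : ∀ x y z : M, leM M x v → leM M y v → leM M z v →
    addM M (mulM M x y) (sM M z) = sM M (addM M (mulM M x y) z)
  a9 : ∀ x : M, leM M x v → mulM M x (zM M) = zM M
  a10 : ∀ x y : M, leM M x v → leM M y v → mulM M x (sM M y) = addM M (mulM M x y) x

end Semantics

/-- if `v` is certified and `m̄ ≠ v` in `M` for all `m < k`, then for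
all `m, n ≤ k`: (1) `M ⊨ m̄ × n̄ = (m·n)̄` and (2) `M ⊨ m̄ + n̄ = (m+n)̄`. -/
theorem statement6 (M : Type) [La.Structure M] (v : M) (hv : Certified M v)
    (k : ℕ) (hk : ∀ m : ℕ, m < k → natM M m ≠ v) :
    ∀ m n : ℕ, m ≤ k → n ≤ k →
      mulM M (natM M m) (natM M n) = natM M (m * n) ∧
      addM M (natM M m) (natM M n) = natM M (m + n) := by
  have hle : ∀ m : ℕ, m ≤ k → leM M (natM M m) v := by
    intro m
    induction m with
    | zero => intro _; exact hv.a1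
    | succ m ih =>
      intro h
      have hm : leM M (natM M m) v := ih (Nat.le_of_succ_le h)
      exact hv.a2 _ ⟨hm, hk m (Nat.lt_of_lt_of_le (Nat.lt_succ_self m) h)⟩
  have hmuladd : ∀ m n : ℕ, m ≤ k → n ≤ k →
      mulM M (natM M m) (natM M n) = natM M (m * n) →
      ∀ p : ℕ, p ≤ k →
        addM M (mulM M (natM M m) (natM M n)) (natM M p) = natM M (m * n + p) := by
    intro m n hm hn hmul p
    induction p with
    | zero =>
      intro _
      have := hv.a7 (natM M m) (natM M n) (hle m hm) (hle n hn)
      simpa [natM, this] using hmul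
    | succ p ih =>
      intro hp
      have hp' : p ≤ k := Nat.le_of_succ_le hp
      have h8 := hv.a8 (natM M m) (natM M n) (natM M p) (hle m hm) (hle n hn) (hle p hp')
      show addM M (mulM M (natM M m) (natM M n)) (sM M (natM M p)) = _
      rw [h8, ih hp']
      rfl
  have hmul : ∀ m n : ℕ, m ≤ k → n ≤ k →
      mulM M (natM M m) (natM M n) = natM M (m * n) := by
    intro m n hm
    induction n with
    | zero =>
      intro _
      simpa [natM] using hv.a9 (natM M m) (hle m hm)
    | succ n ih =>
      intro hn
      have hn' : n ≤ k := Nat.le_of_succ_le hn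
      have h10 := hv.a10 (natM M m) (natM M n) (hle m hm) (hle n hn')
      show mulM M (natM M m) (sM M (natM M n)) = _
      rw [Nat.mul_succ, h10, hmuladd m n hm hn' (ih hn') m hm]
  intro m n hm hn
  refine ⟨hmul m n hm hn, ?_⟩
  rcases Nat.eq_zero_or_pos k with hk0 | hk1
  · subst hk0
    interval_cases m
    interval_cases n
    have h9 := hmul 0 0 le_rfl le_rfl
    have h := hmuladd 0 0 le_rfl le_rfl h9 0 le_rfl
    rw [h9] at h
    exact h
  · have h1 := hmul m 1 hm hk1
    have h2 := hmuladd m 1 hm hk1 h1 n hn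
    rw [h1, Nat.mul_one] at h2
    exact h2
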